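/- Let π be a group, R a commutative ring, A = R[π], and ∂ : A → A a left Fox derivative with coefficients (x/a) defined by ∂(x) = Σ_{a∈π} (x/a)·a for x ∈ π. Then for any fixed F ∈ A, the R-linear map d : A → A defined on group elements by d(x) = Σ_{a∈π} (x/a) · a F a⁻¹ x is a derivation of the algebra A, i.e. d(uv) = d(u)v + u d(v) for all u, v ∈ A. -/

import Mathlib

open MonoidAlgebra

noncomputable def Tfun {R : Type*} [CommRing R] {G : Type*} [Group G]
    (F : MonoidAlgebra R G) (u : MonoidAlgebra R G) : MonoidAlgebra R G :=
  u.coeff.sum fun a r => r • (of R G a * F * of R G a⁻¹)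

lemma Tfun_single {R : Type*} [CommRing R] {G : Type*} [Group G]
    (F : MonoidAlgebra R G) (a : G) (r : R) :
    Tfun F (MonoidAlgebra.single a r) = r • (of R G a * F * of R G a⁻¹) := by
  rw [Tfun, MonoidAlgebra.coeff_single, Finsupp.sum_single_index (by simp)]

lemma Tfun_add {R : Type*} [CommRing R] {G : Type*} [Group G]
    (F : MonoidAlgebra R G) (u v : MonoidAlgebra R G) :
    Tfun F (u + v) = Tfun F u + Tfun F v := by
  rw [Tfun, Tfun, Tfun, MonoidAlgebra.coeff_add]
  exact Finsupp.sum_add_index' (by simp) (by intro a r s; rw [add_smul])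

lemma Tfun_mul_right {R : Type*} [CommRing R] {G : Type*} [Group G]
    (F : MonoidAlgebra R G) (u w : MonoidAlgebra R G) :
    Tfun F u * w = u.coeff.sum fun a r => r • (of R G a * F * of R G a⁻¹ * w) := by
  rw [Tfun, Finsupp.sum_mul]
  simp only [smul_mul_assoc]

lemma Tfun_mul_left {R : Type*} [CommRing R] {G : Type*} [Group G]
    (F : MonoidAlgebra R G) (x : G) (u : MonoidAlgebra R G) :
    Tfun F (of R G x * u) = of R G x * Tfun F u * of R G x⁻¹ := by
  induction u using MonoidAlgebra.induction with
  | zero => simp [Tfun]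
  | single_add a r f _ _ ih =>
      rw [mul_add, Tfun_add, Tfun_add, ih, mul_add, add_mul]
      congr 1
      rw [MonoidAlgebra.of_apply, MonoidAlgebra.single_mul_single, one_mul,
        Tfun_single, Tfun_single, ← MonoidAlgebra.of_apply (R := R)]
      simp [mul_inv_rev, map_mul, mul_smul_comm, smul_mul_assoc, ← mul_assoc, MonoidAlgebra.single_mul_single]
      rw [mul_assoc (MonoidAlgebra.single (x*a) (1:R) * F), MonoidAlgebra.single_mul_single, one_mul]

theorem stmt7 (R : Type*) [CommRing R] (G : Type*) [Group G]
    (D : MonoidAlgebra R G →ₗ[R] MonoidAlgebra R G)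
    (hFox : ∀ x y : G,
      D (MonoidAlgebra.of R G x * MonoidAlgebra.of R G y)
        = D (MonoidAlgebra.of R G x) + MonoidAlgebra.of R G x * D (MonoidAlgebra.of R G y))
    (F : MonoidAlgebra R G)
    (d : MonoidAlgebra R G →ₗ[R] MonoidAlgebra R G)
    (hd : ∀ x : G, d (MonoidAlgebra.of R G x)
        = (D (MonoidAlgebra.of R G x)).coeff.sum
            (fun a r => r • (MonoidAlgebra.of R G a * F * MonoidAlgebra.of R G a⁻¹
              * MonoidAlgebra.of R G x))) :
    ∀ u v : MonoidAlgebra R G, d (u * v) = d u * v + u * d v := by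
  have hdT : ∀ x : G, d (of R G x) = Tfun F (D (of R G x)) * of R G x := by
    intro x
    rw [hd x, Tfun_mul_right]
  have key : ∀ x y : G, d (of R G x * of R G y)
      = d (of R G x) * of R G y + of R G x * d (of R G y) := by
    intro x y
    have hcancel : of R G x⁻¹ * of R G x = 1 := by
      rw [← map_mul, inv_mul_cancel, map_one]
    rw [← map_mul, hdT (x*y), show D (of R G (x*y)) = D (of R G x) + of R G x * D (of R G y) by
      rw [map_mul]; exact hFox x y]
    rw [Tfun_add, add_mul, Tfun_mul_left, hdT x, hdT y, map_mul]
    congr 1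
    · rw [mul_assoc]
    · simp only [mul_assoc]
      rw [← mul_assoc (of R G x⁻¹), hcancel, one_mul]
  intro u v
  induction u using MonoidAlgebra.induction_linear with
  | zero => simp
  | add f g hf hg => simp only [add_mul, map_add, hf, hg]; abel
  | single a r =>
    induction v using MonoidAlgebra.induction_linear with
    | zero => simp
    | add f g hf hg => simp only [mul_add, map_add, hf, hg]; abel
    | single b s =>
      have h1 : (MonoidAlgebra.single a r : MonoidAlgebra R G) = r • of R G a := by
        simp [MonoidAlgebra.of_apply, Finsupp.smul_single]
      have h2 : (MonoidAlgebra.single b s : MonoidAlgebra R G) = s • of R G b := by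
        simp [MonoidAlgebra.of_apply, Finsupp.smul_single]
      rw [h1, h2]
      rw [smul_mul_smul_comm]
      rw [map_smul, map_smul, map_smul, key a b]
      simp only [smul_add, smul_mul_smul_comm]
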